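/- Let α ∈ (0,1), let f be α-strongly regular on [0,∞), and let x₁ > 0 be a point with f(x₁) > 0 satisfying f(0) ≥ (1/(1−α))^{1/α} · f(x₁). Then f(x₁)/|f'(x₁)| ≤ x₁. -/

import Mathlib

/-- If `f` is α-strongly regular on `[0,∞)` with `α ∈ (0,1)`, and
`x₁ > 0` has `f x₁ > 0` and `f 0 ≥ (1/(1−α))^{1/α} · f x₁`, then the hazard ratio of
`f` at `x₁` is at most `x₁`. -/
theorem alpha_sr_hazard_of_peak
    (α : ℝ) (hα0 : 0 < α) (hα1 : α < 1)
    (f : ℝ → ℝ)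
    (hf_nonneg : ∀ x, 0 ≤ x → 0 ≤ f x)
    (hf_anti : ∀ x y, 0 ≤ x → x ≤ y → f y ≤ f x)
    (hf_diff : ∀ x, 0 ≤ x → DifferentiableAt ℝ f x)
    (hf_deriv_neg : ∀ x, 0 ≤ x → deriv f x < 0)
    (hf_sr : ∀ x₁ x₂, 0 ≤ x₁ → x₁ < x₂ →
      f x₂ / |deriv f x₂| - f x₁ / |deriv f x₁| ≤ α * (x₂ - x₁))
    (x₁ : ℝ) (hx₁ : 0 < x₁) (hfx₁ : 0 < f x₁)
    (hpeak : (1 / (1 - α)) ^ (1 / α : ℝ) * f x₁ ≤ f 0) :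
    f x₁ / |deriv f x₁| ≤ x₁ := by
  by_contra hcon
  push_neg at hcon
  set h₁ : ℝ := f x₁ / |deriv f x₁| with hh₁
  have h1α : (0:ℝ) < 1 - α := by linarith
  have hc : 0 < h₁ - α * x₁ := by nlinarith
  set c : ℝ := h₁ - α * x₁ with hcdef
  set r : ℝ := 1 / α with hrdef
  have hr : 0 < r := by positivity
  have hrα : r * α = 1 := by rw [hrdef]; field_simp
  -- the auxiliary function
  set u : ℝ → ℝ := fun x => c + α * x with hu
  have hupos : ∀ x ∈ Set.Icc (0:ℝ) x₁, 0 < u x := by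
    intro x hx
    have := hx.1
    show 0 < c + α * x
    nlinarith
  set G : ℝ → ℝ := fun x => f x * (u x) ^ r with hG
  have hGderiv : ∀ x ∈ Set.Icc (0:ℝ) x₁,
      HasDerivAt G (deriv f x * (u x) ^ r + f x * (r * (u x) ^ (r - 1) * α)) x := by
    intro x hx
    have hux : 0 < u x := hupos x hx
    have hu' : HasDerivAt u α x := by
      exact ((hasDerivAt_const x c).add ((hasDerivAt_id x).const_mul α)).congr_deriv (by ring)
    have hrpow : HasDerivAt (fun y => (u y) ^ r) (r * (u x) ^ (r - 1) * α) x := by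
      have := (Real.hasDerivAt_rpow_const (x := u x) (p := r) (Or.inl hux.ne')).comp x hu'
      exact this.congr_deriv (by ring)
    have hf' : HasDerivAt f (deriv f x) x := (hf_diff x hx.1).hasDerivAt
    exact (hf'.mul hrpow).congr_deriv (by ring)
  -- pointwise key inequality: f x + u x * deriv f x ≥ 0 on [0, x₁]
  have hkey : ∀ x ∈ Set.Icc (0:ℝ) x₁, 0 ≤ f x + u x * deriv f x := by
    intro x hx
    have hx0 : (0:ℝ) ≤ x := hx.1
    have hd : deriv f x < 0 := hf_deriv_neg x hx0
    have habs : |deriv f x| = -deriv f x := abs_of_neg hd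
    have habspos : 0 < |deriv f x| := abs_pos.mpr hd.ne
    have hhaz : u x ≤ f x / |deriv f x| := by
      rcases eq_or_lt_of_le hx.2 with heq | hlt
      · subst heq
        simp only [hu, hcdef]
        nlinarith
      · have := hf_sr x x₁ hx0 hlt
        simp only [hu, hcdef]
        nlinarith
    have : u x * |deriv f x| ≤ f x := by
      rw [le_div_iff₀ habspos] at hhaz
      linarith
    rw [habs] at this
    nlinarith
  -- G is monotone on [0, x₁]
  have hmono : MonotoneOn G (Set.Icc (0:ℝ) x₁) := by
    apply monotoneOn_of_deriv_nonneg (convex_Icc 0 x₁)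
    · exact fun x hx => (hGderiv x hx).continuousAt.continuousWithinAt
    · intro x hx
      rw [interior_Icc] at hx
      exact (hGderiv x ⟨hx.1.le, hx.2.le⟩).differentiableAt.differentiableWithinAt
    · intro x hx
      rw [interior_Icc] at hx
      have hx' : x ∈ Set.Icc (0:ℝ) x₁ := ⟨hx.1.le, hx.2.le⟩
      rw [(hGderiv x hx').deriv]
      have hux : 0 < u x := hupos x hx'
      have hsplit : (u x) ^ r = u x * (u x) ^ (r - 1) := by
        rw [← Real.rpow_one_add' hux.le (by intro h; nlinarith [hrα] : 1 + (r-1) ≠ 0)]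
        norm_num
      have hpow_nonneg : 0 ≤ (u x) ^ (r - 1) := Real.rpow_nonneg hux.le _
      have := hkey x hx'
      calc (0:ℝ) ≤ (u x) ^ (r - 1) * (f x + u x * deriv f x) := by positivity
        _ = deriv f x * (u x) ^ r + f x * (r * (u x) ^ (r - 1) * α) := by
            rw [hsplit]; field_simp [hrdef]; linear_combination (-(f x)) * hrα
  have hGle : G 0 ≤ G x₁ :=
    hmono (Set.left_mem_Icc.mpr hx₁.le) (Set.right_mem_Icc.mpr hx₁.le) hx₁.le
  have hu0 : u 0 = c := by simp [hu]
  have hux₁ : u x₁ = h₁ := by simp [hu, hcdef]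
  rw [hG] at hGle
  simp only [hu0, hux₁] at hGle
  -- combine with the peak hypothesis
  have hcr : (0:ℝ) ≤ c ^ r := Real.rpow_nonneg hc.le _
  have hchain : (1 / (1 - α)) ^ r * f x₁ * c ^ r ≤ f x₁ * h₁ ^ r :=
    le_trans (mul_le_mul_of_nonneg_right hpeak hcr) hGle
  have hmul : (1 / (1 - α)) ^ r * c ^ r = (c / (1 - α)) ^ r := by
    rw [← Real.mul_rpow (by positivity) hc.le]
    ring_nf
  have hfinal : (c / (1 - α)) ^ r ≤ h₁ ^ r := by
    rw [← hmul]
    have hfx₁' := hfx₁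
    nlinarith
  have hle : c / (1 - α) ≤ h₁ := by
    by_contra hlt
    push_neg at hlt
    have h₁nonneg : 0 ≤ h₁ := le_trans hx₁.le hcon.le
    exact absurd (Real.rpow_lt_rpow h₁nonneg hlt hr) (not_lt.mpr hfinal)
  rw [div_le_iff₀ h1α] at hle
  nlinarith
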